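/- Let l ≥ 1, let n₁, …, n_l be positive integers and a₁, …, a_l nonzero integers. Let I := { i ∈ {1,…,l} : |a_i| > 1 }. Assume I ≠ ∅ and that for every i ∉ I one has (−1)^{n_i} a_i = 1 and (−1)^{n_i} a_i² = 1. Then there exists N > 0 such that ℓ(m) ≠ 0 for every integer m > N, where ℓ(m) := ∑_{r ∣ m} μ(m/r) ∏_{i=1}^{l} (1 + (−1)^{n_i} a_i^r). -/

import Mathlib

open Finset

private lemma lef_mu_abs_le_one (k : ℕ) : |(ArithmeticFunction.moebius k : ℤ)| ≤ 1 := by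
  by_cases h : Squarefree k
  · rw [ArithmeticFunction.moebius_apply_of_squarefree h, abs_pow]
    simp
  · rw [ArithmeticFunction.moebius_eq_zero_of_not_squarefree h]
    simp

private lemma lef_geom_le (P : ℤ) (hP : 2 ≤ P) :
    ∀ M : ℕ, ∑ r ∈ range (M + 1), P ^ r ≤ 2 * P ^ M := by
  intro M
  induction M with
  | zero => simp
  | succ M ih =>
    rw [Finset.sum_range_succ]
    have hpow : (0 : ℤ) ≤ P ^ M := pow_nonneg (by linarith) M
    have : 2 * P ^ M ≤ P ^ (M + 1) := by
      rw [pow_succ]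
      nlinarith
    linarith

/-- Let `I = {i : |aᵢ| > 1}`. If `I ≠ ∅`, all `aᵢ` are nonzero, and for every `i ∉ I`
one has `(-1)^{nᵢ} aᵢ = 1` and `(-1)^{nᵢ} aᵢ² = 1`, then `ℓ(m) ≠ 0` for all
sufficiently large `m`, where `ℓ(m) = ∑_{r∣m} μ(m/r) ∏ᵢ (1 + (-1)^{nᵢ} aᵢʳ)`. -/
theorem lefschetz_period_numbers_eventually_nonzero_mixed
    (l : ℕ) (hl : 1 ≤ l) (n : Fin l → ℕ) (hn : ∀ i, 0 < n i) (a : Fin l → ℤ)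
    (ha0 : ∀ i, a i ≠ 0)
    (hI : ∃ j, 1 < |a j|)
    (hnotI : ∀ i, ¬ (1 < |a i|) → (-1) ^ n i * a i = 1 ∧ (-1) ^ n i * (a i) ^ 2 = 1) :
    ∃ N : ℕ, 0 < N ∧ ∀ m : ℕ, N < m →
      (∑ r ∈ m.divisors, ArithmeticFunction.moebius (m / r) *
          ∏ i, (1 + (-1) ^ n i * a i ^ r)) ≠ 0 := by
  set L : ℕ → ℤ := fun r => ∏ i, (1 + (-1) ^ n i * a i ^ r) with hLdef
  set P : ℤ := ∏ i, |a i| with hPdef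
  have hb1 : ∀ i, 1 ≤ |a i| := fun i => Int.one_le_abs (ha0 i)
  obtain ⟨j, hj⟩ := hI
  have hP2 : 2 ≤ P := by
    have h1 : P = |a j| * ∏ i ∈ Finset.univ.erase j, |a i| :=
      (Finset.mul_prod_erase Finset.univ _ (Finset.mem_univ j)).symm
    have h2 : (1 : ℤ) ≤ ∏ i ∈ Finset.univ.erase j, |a i| := by
      calc (1 : ℤ) = ∏ _i ∈ Finset.univ.erase j, (1 : ℤ) := by rw [Finset.prod_const, one_pow]
      _ ≤ ∏ i ∈ Finset.univ.erase j, |a i| :=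
          Finset.prod_le_prod (fun _ _ => by norm_num) (fun i _ => hb1 i)
    nlinarith [abs_nonneg (a j)]
  have hPpos : (0 : ℤ) < P := by linarith
  have habs_factor : ∀ (i : Fin l) (r : ℕ), |(-1 : ℤ) ^ n i * a i ^ r| = |a i| ^ r := by
    intro i r
    rw [abs_mul, abs_pow, abs_pow, abs_neg, abs_one, one_pow, one_mul]
  have upper : ∀ r : ℕ, |L r| ≤ 2 ^ l * P ^ r := by
    intro r
    rw [hLdef]
    simp only
    rw [abs_prod]
    have step : ∀ i ∈ Finset.univ (α := Fin l),
        |1 + (-1 : ℤ) ^ n i * a i ^ r| ≤ 2 * |a i| ^ r := by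
      intro i _
      have h1 : |1 + (-1 : ℤ) ^ n i * a i ^ r| ≤ 1 + |a i| ^ r := by
        calc |1 + (-1 : ℤ) ^ n i * a i ^ r| ≤ |(1 : ℤ)| + |(-1 : ℤ) ^ n i * a i ^ r| :=
              abs_add_le _ _
        _ = 1 + |a i| ^ r := by rw [abs_one, habs_factor]
      have h2 : (1 : ℤ) ≤ |a i| ^ r := by
        have := pow_le_pow_left₀ (by norm_num : (0:ℤ) ≤ 1) (hb1 i) r
        simpa using this
      linarith
    calc ∏ i, |1 + (-1 : ℤ) ^ n i * a i ^ r| ≤ ∏ i, 2 * |a i| ^ r :=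
          Finset.prod_le_prod (fun i _ => abs_nonneg _) step
    _ = 2 ^ l * P ^ r := by
        rw [Finset.prod_mul_distrib, Finset.prod_const, Finset.prod_pow]
        simp
        rfl
  have lower : ∀ m : ℕ, 1 ≤ m → P ^ m ≤ 2 ^ l * |L m| := by
    intro m hm
    have step : ∀ i ∈ Finset.univ (α := Fin l),
        |a i| ^ m ≤ 2 * |1 + (-1 : ℤ) ^ n i * a i ^ m| := by
      intro i _
      by_cases hi : 1 < |a i|
      · have h := abs_sub_abs_le_abs_sub ((-1 : ℤ) ^ n i * a i ^ m) (-1)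
        rw [sub_neg_eq_add, abs_neg, abs_one, habs_factor, add_comm] at h
        have h2m : (2 : ℤ) ≤ |a i| ^ m := by
          calc (2 : ℤ) ≤ |a i| := hi
          _ ≤ |a i| ^ m := le_self_pow₀ (by linarith) (by omega)
        linarith
      · obtain ⟨h1, h2⟩ := hnotI i hi
        have ha1 : a i = 1 := by
          have heq : (-1 : ℤ) ^ n i * a i ^ 2 = ((-1 : ℤ) ^ n i * a i) * a i := by ring
          rw [heq, h1, one_mul] at h2
          exact h2
        have he : (-1 : ℤ) ^ n i = 1 := by rw [ha1, mul_one] at h1; exact h1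
        rw [ha1, he]
        norm_num
    have hchain : ∏ i, |a i| ^ m ≤ ∏ i, 2 * |1 + (-1 : ℤ) ^ n i * a i ^ m| :=
      Finset.prod_le_prod (fun i _ => pow_nonneg (abs_nonneg _) m) step
    calc P ^ m = ∏ i, |a i| ^ m := by rw [Finset.prod_pow]
    _ ≤ ∏ i, 2 * |1 + (-1 : ℤ) ^ n i * a i ^ m| := hchain
    _ = 2 ^ l * |L m| := by
        rw [Finset.prod_mul_distrib, Finset.prod_const, hLdef]
        simp only
        rw [abs_prod]
        simp
  refine ⟨4 * l + 2, by omega, fun m hm => ?_⟩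
  have hm0 : m ≠ 0 := by omega
  intro hzero
  rw [← Nat.cons_self_properDivisors hm0, Finset.sum_cons, Nat.div_self (Nat.pos_of_ne_zero hm0),
    ArithmeticFunction.moebius_apply_one, one_mul] at hzero
  set S : ℤ := ∑ r ∈ m.properDivisors, (ArithmeticFunction.moebius (m / r) : ℤ) * L r with hSdef
  have hLS : L m = -S := by linarith [hzero]
  have hsub : m.properDivisors ⊆ Finset.range (m / 2 + 1) := by
    intro r hr
    rw [Nat.mem_properDivisors] at hr
    obtain ⟨⟨c, hc⟩, hrm⟩ := hr
    rw [Finset.mem_range]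
    have hc2 : 2 ≤ c := by
      rcases Nat.lt_or_ge c 2 with h | h
      · interval_cases c <;> omega
      · exact h
    have h2 : r * 2 ≤ m := by
      calc r * 2 ≤ r * c := Nat.mul_le_mul_left r hc2
      _ = m := hc.symm
    have := (Nat.le_div_iff_mul_le (by norm_num)).2 h2
    omega
  have hSbound : |S| ≤ 2 ^ (l + 1) * P ^ (m / 2) := by
    calc |S| ≤ ∑ r ∈ m.properDivisors,
          |(ArithmeticFunction.moebius (m / r) : ℤ) * L r| :=
          Finset.abs_sum_le_sum_abs _ _
    _ ≤ ∑ r ∈ m.properDivisors, 2 ^ l * P ^ r := by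
        refine Finset.sum_le_sum fun r _ => ?_
        rw [abs_mul]
        calc |(ArithmeticFunction.moebius (m / r) : ℤ)| * |L r| ≤ 1 * |L r| :=
              mul_le_mul_of_nonneg_right (lef_mu_abs_le_one _) (abs_nonneg _)
        _ = |L r| := one_mul _
        _ ≤ 2 ^ l * P ^ r := upper r
    _ ≤ ∑ r ∈ Finset.range (m / 2 + 1), 2 ^ l * P ^ r := by
        refine Finset.sum_le_sum_of_subset_of_nonneg hsub fun r _ _ => ?_
        positivity
    _ = 2 ^ l * ∑ r ∈ Finset.range (m / 2 + 1), P ^ r := by rw [Finset.mul_sum]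
    _ ≤ 2 ^ l * (2 * P ^ (m / 2)) :=
        mul_le_mul_of_nonneg_left (lef_geom_le P hP2 (m / 2)) (by positivity)
    _ = 2 ^ (l + 1) * P ^ (m / 2) := by ring
  have key : P ^ m ≤ 2 ^ (2 * l + 1) * P ^ (m / 2) := by
    calc P ^ m ≤ 2 ^ l * |L m| := lower m (by omega)
    _ = 2 ^ l * |S| := by rw [hLS, abs_neg]
    _ ≤ 2 ^ l * (2 ^ (l + 1) * P ^ (m / 2)) :=
        mul_le_mul_of_nonneg_left hSbound (by positivity)
    _ = 2 ^ (2 * l + 1) * P ^ (m / 2) := by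
        rw [← mul_assoc, ← pow_add]
        congr 2
        omega
  have key2 : 2 ^ (2 * l + 2) * P ^ (m / 2) ≤ P ^ m := by
    have hsplit : P ^ m = P ^ (m - m / 2) * P ^ (m / 2) := by
      rw [← pow_add]
      congr 1
      omega
    have h1 : (2 : ℤ) ^ (2 * l + 2) ≤ 2 ^ (m - m / 2) := by
      apply pow_le_pow_right₀ (by norm_num)
      omega
    have h2 : (2 : ℤ) ^ (m - m / 2) ≤ P ^ (m - m / 2) :=
      pow_le_pow_left₀ (by norm_num) hP2 _
    rw [hsplit]
    have hpq : (0:ℤ) < P ^ (m / 2) := pow_pos hPpos _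
    nlinarith
  have hppos : (0:ℤ) < P ^ (m / 2) := pow_pos hPpos _
  have hfin : (2:ℤ) ^ (2 * l + 2) * P ^ (m / 2) ≤ 2 ^ (2 * l + 1) * P ^ (m / 2) :=
    le_trans key2 key
  have h21 : (2:ℤ) ^ (2 * l + 2) ≤ 2 ^ (2 * l + 1) := le_of_mul_le_mul_right hfin hppos
  have hlt : (2:ℤ) ^ (2 * l + 1) < 2 ^ (2 * l + 2) := by
    apply pow_lt_pow_right₀ (by norm_num)
    omega
  linarith
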